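/- Let p be a prime element of ℤ[i] with N(p) ≡ 1 (mod 8). Then there exist Gaussian integers x₀, y₀, z₀ with x₀ and y₀ coprime (IsCoprime x₀ y₀), z₀ ≠ 0, x₀² + i·y₀² = p·z₀, and N(z₀) < N(p) (so that every prime factor of z₀ has norm strictly smaller than N(p)). -/

import Mathlib

open Zsqrtd Complex GaussianInt

local notation "ℤ[i]" => GaussianInt

/-- The remainder in Gaussian-integer division has norm at most half the divisor's norm. -/
lemma my_norm_mod_le_half (x : ℤ[i]) {y : ℤ[i]} (hy : y ≠ 0) :
    2 * (x % y).norm ≤ y.norm := by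
  have hyc : (y : ℂ) ≠ 0 := by rwa [Ne, ← toComplex_zero, toComplex_inj]
  have hhalf : Complex.normSq ((x / y : ℂ) - ((x / y : ℤ[i]) : ℂ)) ≤ 1 / 2 := by
    calc
      Complex.normSq ((x / y : ℂ) - ((x / y : ℤ[i]) : ℂ))
      _ = Complex.normSq
        ((x / y : ℂ).re - ((x / y : ℤ[i]) : ℂ).re + ((x / y : ℂ).im - ((x / y : ℤ[i]) : ℂ).im) *
          I : ℂ) :=
        congr_arg _ <| by apply Complex.ext <;> simp
      _ ≤ Complex.normSq (1 / 2 + 1 / 2 * I) := by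
        have : |(2⁻¹ : ℝ)| = 2⁻¹ := abs_of_nonneg (by norm_num)
        exact normSq_le_normSq_of_re_le_of_im_le
          (by rw [toComplex_re_div]; simp [normSq, this]; simpa using abs_sub_round (x / y : ℂ).re)
          (by rw [toComplex_im_div]; simp [normSq, this]; simpa using abs_sub_round (x / y : ℂ).im)
      _ ≤ 1 / 2 := by simp [normSq]; norm_num
  rw [← @Int.cast_le ℝ]
  push_cast
  calc (2 : ℝ) * ((x % y).norm : ℝ)
      = 2 * Complex.normSq ((x % y : ℤ[i]) : ℂ) := by rw [intCast_real_norm]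
    _ = 2 * Complex.normSq ((x : ℂ) - (y : ℂ) * ((x / y : ℤ[i]) : ℂ)) := by
        rw [GaussianInt.mod_def, toComplex_sub, toComplex_mul]
    _ = 2 * (Complex.normSq (y : ℂ) * Complex.normSq ((x / y : ℂ) - ((x / y : ℤ[i]) : ℂ))) := by
        rw [← normSq_mul, mul_sub, mul_div_cancel₀ _ hyc]
    _ ≤ 2 * (Complex.normSq (y : ℂ) * (1 / 2)) := by
        gcongr
        exact normSq_nonneg _
    _ = Complex.normSq (y : ℂ) := by ring
    _ = ((y.norm : ℝ)) := by rw [intCast_real_norm]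

/-- Key step: for a Gaussian prime with norm ≡ 1 mod 8, `-i` is a square mod `p`. -/
lemma my_exists_sq (p : ℤ[i]) (hp : Prime p) (h8 : p.norm % 8 = 1) :
    ∃ x : ℤ[i], p ∣ x ^ 2 + (⟨0, 1⟩ : ℤ[i]) := by
  set Iu : ℤ[i] := (⟨0, 1⟩ : ℤ[i]) with hIu
  have hI2 : Iu ^ 2 = -1 := by
    show Iu * Iu * 1 = -1
    ext <;> simp [hIu, Zsqrtd.re_mul, Zsqrtd.im_mul]
  -- basic facts about the norm
  set N : ℕ := p.norm.natAbs with hNdef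
  have hNcast : (N : ℤ) = p.norm := Int.natAbs_of_nonneg (GaussianInt.norm_nonneg p)
  have hN1 : N ≠ 1 := fun hN => hp.not_unit (Zsqrtd.norm_eq_one_iff.1 hN)
  have hN0 : N ≠ 0 := by
    intro hN
    exact hp.ne_zero (GaussianInt.norm_eq_zero.1 (by omega))
  have hN8 : N % 8 = 1 := by omega
  have hN9 : 9 ≤ N := by omega
  -- p divides its norm
  have hpN : p ∣ (N : ℤ[i]) := by
    have : ((p.norm : ℤ) : ℤ[i]) = p * star p := Zsqrtd.norm_eq_mul_conj p
    refine ⟨star p, ?_⟩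
    rw [← this, ← hNcast]
    push_cast
    rfl
  -- find a rational prime q under p
  obtain ⟨q, hqmem, hq⟩ : ∃ q ∈ N.primeFactorsList, p ∣ ((q : ℕ) : ℤ[i]) := by
    have hprod : ((N.primeFactorsList : Multiset ℕ).map (Nat.cast : ℕ → ℤ[i])).prod
        = (N : ℤ[i]) := by
      rw [← Nat.cast_multiset_prod]
      norm_cast
      simp [Nat.prod_primeFactorsList hN0]
    obtain ⟨a, ha, hpa⟩ := hp.exists_mem_multiset_dvd (s := (N.primeFactorsList : Multiset ℕ).map (Nat.cast : ℕ → ℤ[i])) (hprod ▸ hpN)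
    obtain ⟨q, hqmem, rfl⟩ := Multiset.mem_map.1 ha
    exact ⟨q, by simpa using hqmem, hpa⟩
  have hqp : q.Prime := Nat.prime_of_mem_primeFactorsList hqmem
  haveI : Fact q.Prime := ⟨hqp⟩
  -- N divides q ^ 2
  have hNq : N ∣ q ^ 2 := by
    obtain ⟨c, hc⟩ := hq
    have hcn := congrArg Zsqrtd.norm hc
    rw [Zsqrtd.norm_mul, Zsqrtd.norm_natCast] at hcn
    have : (N : ℤ) ∣ (q : ℤ) * q := ⟨Zsqrtd.norm c, by rw [hNcast]; exact hcn⟩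
    have := Int.natAbs_dvd_natAbs.2 this
    simpa [sq, Int.natAbs_mul] using this
  have hq2 : q ≠ 2 := by
    rintro rfl
    have : N ≤ 4 := Nat.le_of_dvd (by norm_num) (by simpa using hNq)
    omega
  have hqodd : q % 2 = 1 := Nat.odd_iff.1 (hqp.odd_of_ne_two hq2)
  have hq2le := hqp.two_le
  -- divisibility transfer from ℤ to ℤ[i]
  have castdvd : ∀ a : ℤ, (q : ℤ) ∣ a → ((q : ℕ) : ℤ[i]) ∣ ((a : ℤ) : ℤ[i]) := by
    rintro a ⟨c, rfl⟩
    exact ⟨(c : ℤ[i]), by push_cast; ring⟩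
  have hcases : q % 8 = 1 ∨ q % 8 = 3 ∨ q % 8 = 5 ∨ q % 8 = 7 := by omega
  rcases hcases with hq8 | hq8 | hq8 | hq8
  · -- q ≡ 1 mod 8 : take an element of order 8 mod q
    obtain ⟨g, hg⟩ := IsCyclic.exists_ofOrder_eq_natCard (α := (ZMod q)ˣ)
    have hcard : Nat.card (ZMod q)ˣ = q - 1 := by
      rw [Nat.card_eq_fintype_card, ZMod.card_units]
    obtain ⟨t, ht⟩ : ∃ t, q - 1 = 8 * t := ⟨(q - 1) / 8, by omega⟩
    have hv2 : (g ^ (4 * t)) ^ 2 = 1 := by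
      rw [← pow_mul]
      have h42 : 4 * t * 2 = q - 1 := by omega
      rw [h42, ← hcard, ← hg, pow_orderOf_eq_one]
    have hv1 : g ^ (4 * t) ≠ 1 := by
      intro hv
      have hdv := orderOf_dvd_of_pow_eq_one hv
      rw [hg, hcard] at hdv
      have := Nat.le_of_dvd (by omega) hdv
      omega
    have hk4 : ((g : ZMod q) ^ t) ^ 4 = -1 := by
      have hcast2 : ((g ^ (4 * t) : (ZMod q)ˣ) : ZMod q) * ((g ^ (4 * t) : (ZMod q)ˣ) : ZMod q)
          = 1 := by
        rw [← Units.val_mul, ← sq, hv2, Units.val_one]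
      rcases mul_self_eq_one_iff.1 hcast2 with h1 | h1
      · exact absurd (Units.ext h1) hv1
      · calc ((g : ZMod q) ^ t) ^ 4 = ((g ^ (4 * t) : (ZMod q)ˣ) : ZMod q) := by
              rw [Units.val_pow_eq_pow_val, ← pow_mul, mul_comm]
          _ = -1 := h1
    set a : ℤ := ((((g : ZMod q) ^ t).val : ℕ) : ℤ) with ha
    have hacast : ((a : ZMod q)) = (g : ZMod q) ^ t := by
      rw [ha]; push_cast
      exact ZMod.natCast_rightInverse _
    have hdvd : (q : ℤ) ∣ a ^ 4 + 1 := by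
      rw [← ZMod.intCast_zmod_eq_zero_iff_dvd]
      push_cast
      rw [hacast, hk4]; ring
    set M : ℤ[i] := ((a : ℤ) : ℤ[i]) with hM
    have h4 : p ∣ M ^ 4 + 1 := by
      refine hq.trans ?_
      have := castdvd _ hdvd
      rw [hM]; push_cast at this ⊢
      exact this
    have hfact : M ^ 4 + 1 = (M ^ 2 + Iu) * (M ^ 2 - Iu) := by linear_combination hI2
    rcases hp.2.2 _ _ (hfact ▸ h4) with hc1 | hc2
    · exact ⟨M, hc1⟩
    · refine ⟨M ^ 3, ?_⟩
      have hident : (M ^ 3) ^ 2 + Iu = M ^ 2 * (M ^ 4 + 1) - (M ^ 2 - Iu) := by ring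
      rw [hident]
      exact dvd_sub (h4.mul_left _) hc2
  · -- q ≡ 3 mod 8 : use √(-2)
    have hsq : IsSquare (-2 : ZMod q) := (ZMod.exists_sq_eq_neg_two_iff hq2).2 (by omega)
    obtain ⟨d, hd⟩ := hsq
    have h2ne : (2 : ZMod q) ≠ 0 := by
      intro h0
      have : (q : ℤ) ∣ 2 := by
        rw [← ZMod.intCast_zmod_eq_zero_iff_dvd]; exact_mod_cast h0
      have := Int.le_of_dvd (by norm_num) this
      omega
    set e : ZMod q := d * 2⁻¹ with he'
    have he : 2 * e ^ 2 + 1 = 0 := by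
      have h22 : (2 : ZMod q) * 2⁻¹ = 1 := mul_inv_cancel₀ h2ne
      have hd2 : d ^ 2 = -2 := by rw [sq, ← hd]
      rw [he']
      calc 2 * (d * 2⁻¹) ^ 2 + 1 = d ^ 2 * 2⁻¹ * (2 * 2⁻¹) + 1 := by ring
        _ = (-2) * 2⁻¹ * 1 + 1 := by rw [hd2, h22]
        _ = -(2 * 2⁻¹) + 1 := by ring
        _ = 0 := by rw [h22]; ring
    set a : ℤ := ((e.val : ℕ) : ℤ) with ha
    have hacast : ((a : ZMod q)) = e := by
      rw [ha]; push_cast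
      exact ZMod.natCast_rightInverse _
    have hdvd : (q : ℤ) ∣ 2 * a ^ 2 + 1 := by
      rw [← ZMod.intCast_zmod_eq_zero_iff_dvd]
      push_cast
      rw [hacast]; exact he
    set M : ℤ[i] := ((a : ℤ) : ℤ[i]) with hM
    have h2d : p ∣ 2 * M ^ 2 + 1 := by
      refine hq.trans ?_
      have := castdvd _ hdvd
      rw [hM]; push_cast at this ⊢
      exact this
    refine ⟨M * (1 + Iu), ?_⟩
    have hident : (M * (1 + Iu)) ^ 2 + Iu = (2 * M ^ 2 + 1) * Iu := by
      linear_combination (M ^ 2) * hI2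
    rw [hident]
    exact h2d.mul_right Iu
  · -- q ≡ 5 mod 8 : impossible
    exfalso
    obtain ⟨k, hk2, hkN⟩ := (Nat.dvd_prime_pow hqp).1 hNq
    interval_cases k
    · simp at hkN; omega
    · simp at hkN; omega
    · -- N = q², so p is associated to q, so q is a Gaussian prime: contradiction
      obtain ⟨c, hc⟩ := hq
      have hcn := congrArg Zsqrtd.norm hc
      rw [Zsqrtd.norm_mul, Zsqrtd.norm_natCast] at hcn
      have hnormc : Zsqrtd.norm c = 1 := by
        have hNint : Zsqrtd.norm p = ((q : ℤ)) ^ 2 := by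
          rw [← hNcast, hkN]; push_cast; ring
        rw [hNint] at hcn
        have hqpos : (0 : ℤ) < (q : ℤ) := by exact_mod_cast hqp.pos
        nlinarith [hcn]
      have hcu : IsUnit c := Zsqrtd.norm_eq_one_iff.1 (by rw [hnormc]; rfl)
      have hassoc : Associated p ((q : ℕ) : ℤ[i]) := by
        obtain ⟨u, rfl⟩ := hcu
        exact ⟨u, hc.symm⟩
      have hqprime : Prime ((q : ℕ) : ℤ[i]) := hassoc.prime hp
      have := (GaussianInt.prime_iff_mod_four_eq_three_of_nat_prime q).1 hqprime
      omega
  · -- q ≡ 7 mod 8 : use √2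
    have hsq : IsSquare (2 : ZMod q) := (ZMod.exists_sq_eq_two_iff hq2).2 (by omega)
    obtain ⟨d, hd⟩ := hsq
    have h2ne : (2 : ZMod q) ≠ 0 := by
      intro h0
      have : (q : ℤ) ∣ 2 := by
        rw [← ZMod.intCast_zmod_eq_zero_iff_dvd]; exact_mod_cast h0
      have := Int.le_of_dvd (by norm_num) this
      omega
    have hdne : d ≠ 0 := by
      intro h0; rw [h0, mul_zero] at hd; exact h2ne hd
    set e : ZMod q := d⁻¹ with he'
    have hdd : d * d⁻¹ = 1 := mul_inv_cancel₀ hdne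
    have he : 2 * e ^ 2 - 1 = 0 := by
      rw [he']
      calc 2 * (d⁻¹) ^ 2 - 1 = 2 * d⁻¹ * d⁻¹ - 1 := by ring
        _ = d * d * d⁻¹ * d⁻¹ - 1 := by rw [hd]
        _ = (d * d⁻¹) * (d * d⁻¹) - 1 := by ring
        _ = 0 := by rw [hdd]; ring
    set a : ℤ := ((e.val : ℕ) : ℤ) with ha
    have hacast : ((a : ZMod q)) = e := by
      rw [ha]; push_cast
      exact ZMod.natCast_rightInverse _
    have hdvd : (q : ℤ) ∣ 2 * a ^ 2 - 1 := by
      rw [← ZMod.intCast_zmod_eq_zero_iff_dvd]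
      push_cast
      rw [hacast]; exact he
    set M : ℤ[i] := ((a : ℤ) : ℤ[i]) with hM
    have h2d : p ∣ 2 * M ^ 2 - 1 := by
      refine hq.trans ?_
      have := castdvd _ hdvd
      rw [hM]; push_cast at this ⊢
      exact this
    refine ⟨M * (1 - Iu), ?_⟩
    have hident : (M * (1 - Iu)) ^ 2 + Iu = -((2 * M ^ 2 - 1) * Iu) := by
      linear_combination (M ^ 2) * hI2
    rw [hident]
    exact (h2d.mul_right Iu).neg_right

theorem stmt_4 (p : GaussianInt) (hp : Prime p) (h : p.norm ≡ 1 [ZMOD 8]) :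
    ∃ x₀ y₀ z₀ : GaussianInt, IsCoprime x₀ y₀ ∧ z₀ ≠ 0 ∧
      x₀ ^ 2 + (⟨0, 1⟩ : GaussianInt) * y₀ ^ 2 = p * z₀ ∧ z₀.norm < p.norm := by
  have h8 : p.norm % 8 = 1 := by
    have := Int.ModEq.dvd h
    omega
  obtain ⟨x, hx⟩ := my_exists_sq p hp h8
  set Iu : GaussianInt := (⟨0, 1⟩ : GaussianInt) with hIu
  have hp0 : p ≠ 0 := hp.ne_zero
  have hn1 : p.norm ≠ 1 := fun hh => hp.not_unit (Zsqrtd.norm_eq_one_iff.1 (by rw [hh]; rfl))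
  have hn0 : p.norm ≠ 0 := fun hh => hp0 (GaussianInt.norm_eq_zero.1 hh)
  have hnnn := GaussianInt.norm_nonneg p
  have hn9 : 9 ≤ p.norm := by omega
  set r : GaussianInt := x % p with hr
  have hpr : p ∣ r ^ 2 + Iu := by
    have hxr : r = x - p * (x / p) := GaussianInt.mod_def x p
    have hid : r ^ 2 + Iu = (x ^ 2 + Iu) - (x + r) * (p * (x / p)) := by rw [hxr]; ring
    rw [hid]
    exact dvd_sub hx (Dvd.dvd.mul_left (dvd_mul_right p _) _)
  obtain ⟨z, hz⟩ := hpr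
  have hhalf : 2 * r.norm ≤ p.norm := my_norm_mod_le_half x hp0
  have hrnn := GaussianInt.norm_nonneg r
  have hnorm1 : (r ^ 2 + Iu).norm = (r ^ 2).re ^ 2 + ((r ^ 2).im + 1) ^ 2 := by
    simp [Zsqrtd.norm_def, Zsqrtd.re_add, Zsqrtd.im_add, hIu]
    ring
  have hnorm2 : (r ^ 2).re ^ 2 + (r ^ 2).im ^ 2 = r.norm ^ 2 := by
    have hh : (r ^ 2).norm = r.norm ^ 2 := by rw [sq, sq, Zsqrtd.norm_mul]
    rw [← hh]
    simp [Zsqrtd.norm_def]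
    ring
  have hlt : (r ^ 2 + Iu).norm < p.norm ^ 2 := by
    rw [hnorm1]
    nlinarith [sq_nonneg ((r ^ 2).im - 1), sq_nonneg (r ^ 2).re, hnorm2, hhalf, hn9, hrnn]
  have hzn : z.norm < p.norm := by
    have hne := congrArg Zsqrtd.norm hz
    rw [Zsqrtd.norm_mul] at hne
    have hppos : 0 < p.norm := by omega
    have h2 : p.norm * z.norm < p.norm * p.norm := by
      rw [← hne, ← sq]
      exact hlt
    exact lt_of_mul_lt_mul_left h2 (le_of_lt hppos)
  have hz0 : z ≠ 0 := by
    rintro rfl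
    rw [mul_zero] at hz
    have him := congrArg Zsqrtd.im hz
    have hmul : (r ^ 2).im = r.re * r.im + r.im * r.re := by rw [sq]; rfl
    simp [Zsqrtd.im_add, hIu, hmul] at him
    have him2 : (-1 : ℤ) = 2 * (r.re * r.im) := by linear_combination -him
    have : (2 : ℤ) ∣ (-1) := ⟨r.re * r.im, him2⟩
    norm_num at this
  exact ⟨r, 1, z, isCoprime_one_right, hz0, by rw [one_pow, mul_one]; exact hz, hzn⟩
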